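/- Suppose q > μ and fix ε ∈ ℝ. The solution of the boundary value problem in Lemma 3.1 is unique: if g₁, g₂ : (−∞, ε) → (0, k*) are differentiable, both satisfy gᵢ'(s) = 1 − Z(gᵢ(s))/(q·W(gᵢ(s))) for all s < ε, and both satisfy lim_{s↑ε} gᵢ(s) = 0 and lim_{s→−∞} gᵢ(s) = k*, then g₁(s) = g₂(s) for all s < ε. -/

import Mathlib

open Real Filter Set MeasureTheory

noncomputable def dlt (σ μ q : ℝ) : ℝ := Real.sqrt ((μ / σ ^ 2 - 1 / 2) ^ 2 + 2 * q / σ ^ 2)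

noncomputable def gma (σ μ : ℝ) : ℝ := 1 / 2 - μ / σ ^ 2

noncomputable def gma1 (σ μ q : ℝ) : ℝ := gma σ μ - dlt σ μ q

noncomputable def gma2 (σ μ q : ℝ) : ℝ := gma σ μ + dlt σ μ q

/-- The scale function `W^{(q)}` of `X_t = (μ - σ²/2) t + σ B_t`. -/
noncomputable def W (σ μ q : ℝ) (x : ℝ) : ℝ :=
  if 0 ≤ x then 2 / (σ ^ 2 * dlt σ μ q) * Real.exp (gma σ μ * x) * Real.sinh (dlt σ μ q * x)
  else 0

/-- The scale function `Z^{(q)}` of `X_t = (μ - σ²/2) t + σ B_t`. -/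
noncomputable def Z (σ μ q : ℝ) (x : ℝ) : ℝ :=
  if 0 ≤ x then
    Real.exp (gma σ μ * x) * Real.cosh (dlt σ μ q * x)
      - gma σ μ / dlt σ μ q * Real.exp (gma σ μ * x) * Real.sinh (dlt σ μ q * x)
  else 1

/-- `k* = (γ₂ - γ₁)⁻¹ log((1 - 1/γ₁)/(1 - 1/γ₂))`. -/
noncomputable def kstar (σ μ q : ℝ) : ℝ :=
  (gma2 σ μ q - gma1 σ μ q)⁻¹ *
    Real.log ((1 - 1 / gma1 σ μ q) / (1 - 1 / gma2 σ μ q))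

/-- The (autonomous) right-hand side of the ODE. -/
noncomputable def Fq (σ μ q : ℝ) (x : ℝ) : ℝ := 1 - Z σ μ q x / (q * W σ μ q x)

lemma dlt_pos {σ μ q : ℝ} (hσ : 0 < σ) (hq : 0 < q) : 0 < dlt σ μ q :=
  Real.sqrt_pos.mpr (by positivity)

lemma contDiffOn_Fq {σ μ q : ℝ} (hσ : 0 < σ) (hq : 0 < q) :
    ContDiffOn ℝ 1 (Fq σ μ q) (Ioi 0) := by
  have hδ : 0 < dlt σ μ q := dlt_pos hσ hq
  have h1 : ContDiffOn ℝ 1 (fun x =>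
      1 - (Real.exp (gma σ μ * x) * Real.cosh (dlt σ μ q * x)
          - gma σ μ / dlt σ μ q * Real.exp (gma σ μ * x) * Real.sinh (dlt σ μ q * x)) /
        (q * (2 / (σ ^ 2 * dlt σ μ q) * Real.exp (gma σ μ * x)
          * Real.sinh (dlt σ μ q * x)))) (Ioi 0) := by
    apply ContDiffOn.sub contDiffOn_const
    apply ContDiffOn.div
    · apply ContDiff.contDiffOn
      exact (((contDiff_const.mul contDiff_id).exp.mul
          (contDiff_const.mul contDiff_id).cosh).sub
        ((contDiff_const.mul ((contDiff_const.mul contDiff_id).exp)).mul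
          (contDiff_const.mul contDiff_id).sinh))
    · apply ContDiff.contDiffOn
      exact contDiff_const.mul
        (((contDiff_const.mul ((contDiff_const.mul contDiff_id).exp))).mul
          (contDiff_const.mul contDiff_id).sinh)
    · intro x hx
      have hs : 0 < Real.sinh (dlt σ μ q * x) := Real.sinh_pos_iff.mpr (mul_pos hδ hx)
      have : 0 < q * (2 / (σ ^ 2 * dlt σ μ q) * Real.exp (gma σ μ * x)
          * Real.sinh (dlt σ μ q * x)) :=
        mul_pos hq (mul_pos (mul_pos (div_pos two_pos (mul_pos (pow_pos hσ 2) hδ))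
          (Real.exp_pos _)) hs)
      exact ne_of_gt this
  refine h1.congr fun x hx => ?_
  have hx0 : (0:ℝ) ≤ x := le_of_lt hx
  simp only [Fq, W, Z, if_pos hx0]

/-- Uniqueness of solutions on `Iio ε` given agreement at one point. -/
lemma eqOn_of_eq_at {σ μ q ε : ℝ} (hσ : 0 < σ) (hq : 0 < q) {f g : ℝ → ℝ}
    (hmf : ∀ s ∈ Iio ε, 0 < f s) (hmg : ∀ s ∈ Iio ε, 0 < g s)
    (hof : ∀ s ∈ Iio ε, HasDerivAt f (Fq σ μ q (f s)) s)
    (hog : ∀ s ∈ Iio ε, HasDerivAt g (Fq σ μ q (g s)) s)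
    {t₀ : ℝ} (ht₀ : t₀ < ε) (heq : f t₀ = g t₀) :
    EqOn f g (Iio ε) := by
  intro t ht
  set a : ℝ := min t t₀ - 1 with ha_def
  set b : ℝ := (max t t₀ + ε) / 2 with hb_def
  have hmaxlt : max t t₀ < ε := max_lt ht ht₀
  have hab : a < b := by
    have h1 : a < min t t₀ := sub_one_lt _
    have h2 : min t t₀ ≤ max t t₀ := le_trans (min_le_left _ _) (le_max_left _ _)
    have h3 : max t t₀ < b := by simp only [hb_def]; linarith
    linarith
  have hbe : b < ε := by simp only [hb_def]; linarith
  have hsub : Icc a b ⊆ Iio ε := fun x hx => lt_of_le_of_lt hx.2 hbe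
  have hamin : a < min t t₀ := sub_one_lt _
  have hmaxb : max t t₀ < b := by simp only [hb_def]; linarith
  have htmem : t ∈ Ioo a b :=
    ⟨lt_of_lt_of_le hamin (min_le_left _ _), lt_of_le_of_lt (le_max_left _ _) hmaxb⟩
  have ht₀mem : t₀ ∈ Ioo a b :=
    ⟨lt_of_lt_of_le hamin (min_le_right _ _), lt_of_le_of_lt (le_max_right _ _) hmaxb⟩
  have hcf : ContinuousOn f (Icc a b) := fun x hx =>
    ((hof x (hsub hx)).continuousAt).continuousWithinAt
  have hcg : ContinuousOn g (Icc a b) := fun x hx =>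
    ((hog x (hsub hx)).continuousAt).continuousWithinAt
  have hne : (Icc a b).Nonempty := nonempty_Icc.mpr hab.le
  obtain ⟨x₁, hx₁m, hx₁⟩ := isCompact_Icc.exists_isMinOn hne hcf
  obtain ⟨x₂, hx₂m, hx₂⟩ := isCompact_Icc.exists_isMinOn hne hcg
  obtain ⟨y₁, hy₁m, hy₁⟩ := isCompact_Icc.exists_isMaxOn hne hcf
  obtain ⟨y₂, hy₂m, hy₂⟩ := isCompact_Icc.exists_isMaxOn hne hcg
  set m : ℝ := min (f x₁) (g x₂) with hm_def
  set M : ℝ := max (f y₁) (g y₂) with hM_def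
  have hm0 : 0 < m := lt_min (hmf _ (hsub hx₁m)) (hmg _ (hsub hx₂m))
  have hmemf : ∀ x ∈ Ioo a b, f x ∈ Icc m M := by
    intro x hx
    have hx' : x ∈ Icc a b := Ioo_subset_Icc_self hx
    exact ⟨le_trans (min_le_left _ _) (hx₁ hx'), le_trans (hy₁ hx') (le_max_left _ _)⟩
  have hmemg : ∀ x ∈ Ioo a b, g x ∈ Icc m M := by
    intro x hx
    have hx' : x ∈ Icc a b := Ioo_subset_Icc_self hx
    exact ⟨le_trans (min_le_right _ _) (hx₂ hx'), le_trans (hy₂ hx') (le_max_right _ _)⟩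
  -- Lipschitz bound for Fq on Icc m M
  have hIccsub : Icc m M ⊆ Ioi 0 := fun x hx => lt_of_lt_of_le hm0 hx.1
  have hcd := contDiffOn_Fq (μ := μ) hσ hq
  have hdiff : ∀ x ∈ Icc m M, DifferentiableAt ℝ (Fq σ μ q) x := by
    intro x hx
    exact ((hcd.contDiffAt (isOpen_Ioi.mem_nhds (hIccsub hx))).differentiableAt one_ne_zero)
  have hdercont : ContinuousOn (deriv (Fq σ μ q)) (Icc m M) :=
    (hcd.continuousOn_deriv_of_isOpen isOpen_Ioi le_rfl).mono hIccsub
  obtain ⟨C, hC⟩ := isCompact_Icc.exists_bound_of_continuousOn hdercont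
  have hbound : ∀ x ∈ Icc m M, ‖deriv (Fq σ μ q) x‖₊ ≤ Real.toNNReal C := by
    intro x hx
    have h1 : ‖deriv (Fq σ μ q) x‖ ≤ C := hC x hx
    have h2 : C ≤ (Real.toNNReal C : ℝ) := Real.le_coe_toNNReal C
    exact_mod_cast h1.trans h2
  have hK : LipschitzOnWith (Real.toNNReal C) (Fq σ μ q) (Icc m M) :=
    (convex_Icc m M).lipschitzOnWith_of_nnnorm_deriv_le hdiff hbound
  -- apply uniqueness
  have := ODE_solution_unique_of_mem_Ioo
    (v := fun _ x => Fq σ μ q x) (s := fun _ => Icc m M) (K := Real.toNNReal C)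
    (fun _ _ => hK) ht₀mem
    (fun x hx => ⟨hof x (hsub (Ioo_subset_Icc_self hx)), hmemf x hx⟩)
    (fun x hx => ⟨hog x (hsub (Ioo_subset_Icc_self hx)), hmemg x hx⟩) heq
  exact this htmem

/-- If `f s0 = g s1` with `s0 < s1 < ε`, we get a contradiction via the limit of `g` at `ε`. -/
lemma key {σ μ q ε : ℝ} (hσ : 0 < σ) (hq : 0 < q) {f g : ℝ → ℝ}
    (hmf : ∀ s ∈ Iio ε, 0 < f s) (hmg : ∀ s ∈ Iio ε, 0 < g s)
    (hof : ∀ s ∈ Iio ε, HasDerivAt f (Fq σ μ q (f s)) s)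
    (hog : ∀ s ∈ Iio ε, HasDerivAt g (Fq σ μ q (g s)) s)
    (hlimg : Tendsto g (nhdsWithin ε (Iio ε)) (nhds 0))
    {s0 s1 : ℝ} (hs1 : s1 < ε) (hlt : s0 < s1) (heqv : f s0 = g s1) : False := by
  set c : ℝ := s1 - s0 with hc_def
  have hc : 0 < c := by simp only [hc_def]; linarith
  set ε' : ℝ := ε - c with hε'_def
  have hε' : ε' < ε := by simp only [hε'_def]; linarith
  -- the shifted solution
  set g₃ : ℝ → ℝ := fun s => g (s + c) with hg₃_def
  have hmg₃ : ∀ s ∈ Iio ε', 0 < g₃ s := fun s hs => hmg (s + c) (by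
    simp only [mem_Iio] at hs ⊢; simp only [hε'_def] at hs; linarith)
  have hog₃ : ∀ s ∈ Iio ε', HasDerivAt g₃ (Fq σ μ q (g₃ s)) s := by
    intro s hs
    have hsc : s + c ∈ Iio ε := by
      simp only [mem_Iio] at hs ⊢; simp only [hε'_def] at hs; linarith
    have h1 : HasDerivAt (fun u : ℝ => u + c) 1 s := (hasDerivAt_id s).add_const c
    have := (hog (s + c) hsc).comp s h1
    rw [mul_one] at this; exact this
  have hmf' : ∀ s ∈ Iio ε', 0 < f s := fun s hs => hmf s (hs.trans hε')
  have hof' : ∀ s ∈ Iio ε', HasDerivAt f (Fq σ μ q (f s)) s := fun s hs =>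
    hof s (hs.trans hε')
  have hs0' : s0 < ε' := by simp only [hε'_def, hc_def]; linarith
  have heq' : f s0 = g₃ s0 := by
    simp only [hg₃_def]
    rw [heqv]
    congr 1
    simp only [hc_def]; ring
  have heqon : EqOn f g₃ (Iio ε') := eqOn_of_eq_at hσ hq hmf' hmg₃ hof' hog₃ hs0' heq'
  -- f tends to f ε' at ε'⁻, but also to 0 via g₃; contradiction with f ε' > 0
  have hshift : Tendsto (fun s : ℝ => s + c) (nhdsWithin ε' (Iio ε')) (nhdsWithin ε (Iio ε)) := by
    apply tendsto_nhdsWithin_of_tendsto_nhds_of_eventually_within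
    · have : Tendsto (fun s : ℝ => s + c) (nhds ε') (nhds (ε' + c)) :=
        (continuous_id.add continuous_const).tendsto ε'
      have h2 : ε' + c = ε := by simp [hε'_def]
      rw [h2] at this
      exact this.mono_left nhdsWithin_le_nhds
    · filter_upwards [self_mem_nhdsWithin] with x hx
      simp only [mem_Iio] at hx ⊢
      simp only [hε'_def] at hx; linarith
  have hlim₃ : Tendsto g₃ (nhdsWithin ε' (Iio ε')) (nhds 0) := hlimg.comp hshift
  have hlimf : Tendsto f (nhdsWithin ε' (Iio ε')) (nhds (f ε')) :=
    ((hof ε' hε').continuousAt.continuousWithinAt)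
  have hlimf0 : Tendsto f (nhdsWithin ε' (Iio ε')) (nhds 0) := by
    refine hlim₃.congr' ?_
    filter_upwards [self_mem_nhdsWithin] with x hx
    exact (heqon hx).symm
  have : f ε' = 0 := tendsto_nhds_unique hlimf hlimf0
  exact absurd this (ne_of_gt (hmf ε' hε'))

theorem stmt_12 (σ μ q ε : ℝ) (hσ : 0 < σ) (hq : 0 < q) (hqμ : μ < q)
    (g₁ g₂ : ℝ → ℝ)
    (hmem₁ : ∀ s ∈ Set.Iio ε, g₁ s ∈ Set.Ioo 0 (kstar σ μ q))
    (hmem₂ : ∀ s ∈ Set.Iio ε, g₂ s ∈ Set.Ioo 0 (kstar σ μ q))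
    (hode₁ : ∀ s ∈ Set.Iio ε,
      HasDerivAt g₁ (1 - Z σ μ q (g₁ s) / (q * W σ μ q (g₁ s))) s)
    (hode₂ : ∀ s ∈ Set.Iio ε,
      HasDerivAt g₂ (1 - Z σ μ q (g₂ s) / (q * W σ μ q (g₂ s))) s)
    (hlimε₁ : Filter.Tendsto g₁ (nhdsWithin ε (Set.Iio ε)) (nhds 0))
    (hlimε₂ : Filter.Tendsto g₂ (nhdsWithin ε (Set.Iio ε)) (nhds 0))
    (hlimk₁ : Filter.Tendsto g₁ Filter.atBot (nhds (kstar σ μ q)))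
    (hlimk₂ : Filter.Tendsto g₂ Filter.atBot (nhds (kstar σ μ q))) :
    Set.EqOn g₁ g₂ (Set.Iio ε) := by
  have hm₁ : ∀ s ∈ Iio ε, 0 < g₁ s := fun s hs => (hmem₁ s hs).1
  have hm₂ : ∀ s ∈ Iio ε, 0 < g₂ s := fun s hs => (hmem₂ s hs).1
  have ho₁ : ∀ s ∈ Iio ε, HasDerivAt g₁ (Fq σ μ q (g₁ s)) s := hode₁
  have ho₂ : ∀ s ∈ Iio ε, HasDerivAt g₂ (Fq σ μ q (g₂ s)) s := hode₂
  intro s0 hs0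
  by_contra hne
  set y : ℝ := g₁ s0 with hy_def
  have hy : y ∈ Ioo 0 (kstar σ μ q) := hmem₁ s0 hs0
  -- find a point far left where g₂ > y
  have h1 : ∀ᶠ s in atBot, y < g₂ s := hlimk₂.eventually (eventually_gt_nhds hy.2)
  have h2 : ∀ᶠ s in atBot, s < min s0 ε := eventually_lt_atBot _
  obtain ⟨a, hay, ha⟩ := (h1.and h2).exists
  have haε : a < ε := lt_of_lt_of_le ha (min_le_right _ _)
  -- find a point near ε where g₂ < y
  have h3 : ∀ᶠ s in nhdsWithin ε (Iio ε), g₂ s < y :=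
    hlimε₂.eventually (eventually_lt_nhds hy.1)
  have h4 : ∀ᶠ s in nhdsWithin ε (Iio ε), a < s :=
    eventually_nhdsWithin_of_eventually_nhds (eventually_gt_nhds haε)
  obtain ⟨b, hby, hab, hb⟩ := (h3.and (h4.and self_mem_nhdsWithin)).exists
  have hbε : b < ε := hb
  -- IVT: g₂ hits y at some s1 ∈ [a, b]
  have hcont : ContinuousOn g₂ (Icc a b) := fun x hx =>
    ((ho₂ x (mem_Iio.mpr (lt_of_le_of_lt hx.2 hbε))).continuousAt).continuousWithinAt
  have hyIcc : y ∈ Icc (g₂ b) (g₂ a) := ⟨hby.le, hay.le⟩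
  obtain ⟨s1, hs1m, hs1⟩ := intermediate_value_Icc' hab.le hcont hyIcc
  have hs1ε : s1 < ε := lt_of_le_of_lt hs1m.2 hbε
  rcases lt_trichotomy s0 s1 with h | h | h
  · exact key hσ hq hm₁ hm₂ ho₁ ho₂ hlimε₂ hs1ε h hs1.symm
  · exact hne (by rw [← hs1, h])
  · exact key hσ hq hm₂ hm₁ ho₂ ho₁ hlimε₁ hs0 h hs1
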